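/- Suppose K is a ×-deformation retract of L via inclusion i : K → L, and consider a pushout square in simplicial complexes with u : K → X along i, producing j : X → Y = L +_K X. Then j is the inclusion of a ×-deformation retract. -/

import Mathlib

/-- An (abstract) simplicial complex: a vertex type together with a collection of
finite subsets (faces) closed under taking subsets. -/
structure Cpx : Type 1 where
  V : Type
  faces : Set (Set V)
  finite_mem : ∀ σ ∈ faces, σ.Finite
  down : ∀ σ ∈ faces, ∀ τ ⊆ σ, τ ∈ faces

/-- A map of simplicial complexes: a vertex function sending faces to faces. -/
structure CpxHom (K L : Cpx) where
  f : K.V → L.V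
  map_face : ∀ σ ∈ K.faces, f '' σ ∈ L.faces

/-- Composition of maps of simplicial complexes. -/
def CpxHom.comp {K L M : Cpx} (g : CpxHom L M) (h : CpxHom K L) : CpxHom K M where
  f := g.f ∘ h.f
  map_face := fun σ hσ => by
    rw [Set.image_comp]
    exact g.map_face _ (h.map_face _ hσ)

/-- The path complex `I_n` on vertices `{0, …, n}` with edges `{i, i+1}`. -/
def pathCpx (n : ℕ) : Cpx where
  V := Fin (n + 1)
  faces := {σ | σ.Finite ∧ ∀ a ∈ σ, ∀ b ∈ σ, (a : ℕ) ≤ (b : ℕ) + 1}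
  finite_mem := fun _ hσ => hσ.1
  down := fun σ hσ τ hτ => ⟨hσ.1.subset hτ, fun a ha b hb => hσ.2 a (hτ ha) b (hτ hb)⟩

/-- The product of simplicial complexes: a finite set is a face iff both projections
are faces. -/
def prodCpx (K L : Cpx) : Cpx where
  V := K.V × L.V
  faces := {S | S.Finite ∧ Prod.fst '' S ∈ K.faces ∧ Prod.snd '' S ∈ L.faces}
  finite_mem := fun _ hS => hS.1
  down := fun S hS T hT =>
    ⟨hS.1.subset hT, K.down _ hS.2.1 _ (Set.image_mono hT),
      L.down _ hS.2.2 _ (Set.image_mono hT)⟩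

/-- `f` and `g` are `n`-homotopic: there is a map `H : K × I_n → L` with
`H(-,0) = f` and `H(-,n) = g`. -/
def NHomotopic {K L : Cpx} (n : ℕ) (f g : CpxHom K L) : Prop :=
  ∃ H : CpxHom (prodCpx K (pathCpx n)) L,
    (∀ x : K.V, H.f (x, (0 : Fin (n + 1))) = f.f x) ∧
    (∀ x : K.V, H.f (x, Fin.last n) = g.f x)

/-- `f` and `g` are `×`-homotopic: `n`-homotopic for some `n ≥ 1`. -/
def XHomotopic {K L : Cpx} (f g : CpxHom K L) : Prop :=
  ∃ n, 1 ≤ n ∧ NHomotopic n f g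
/-- `i : K → L` is the inclusion of a ×-deformation retract: there is a retraction
`r : L → K` with `r ∘ i = id` and an `n`-homotopy (`n ≥ 1`) `H : L × I_n → L` from
the identity to `i ∘ r`, constant on the image of `K`. -/
def IsXDefRetractIncl {K L : Cpx} (i : CpxHom K L) : Prop :=
  ∃ r : CpxHom L K, (∀ x : K.V, r.f (i.f x) = x) ∧
    ∃ n, 1 ≤ n ∧ ∃ H : CpxHom (prodCpx L (pathCpx n)) L,
      (∀ y : L.V, H.f (y, (0 : Fin (n + 1))) = y) ∧
      (∀ y : L.V, H.f (y, Fin.last n) = i.f (r.f y)) ∧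
      (∀ x : K.V, ∀ t : Fin (n + 1), H.f (i.f x, t) = i.f x)
/-- The commutative square with legs `i : K → L`, `u : K → X`, `v : L → Y`,
`j : X → Y` is a pushout square in the category of simplicial complexes. -/
def IsPushoutSq {K L X Y : Cpx} (i : CpxHom K L) (u : CpxHom K X)
    (v : CpxHom L Y) (j : CpxHom X Y) : Prop :=
  j.comp u = v.comp i ∧
  ∀ (Z : Cpx) (a : CpxHom L Z) (b : CpxHom X Z), a.comp i = b.comp u →
    ∃! c : CpxHom Y Z, c.comp v = a ∧ c.comp j = b


section PushAux

lemma CpxHom.ext' {K L : Cpx} {f g : CpxHom K L} (h : f.f = g.f) : f = g := by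
  cases f; cases g; cases h; rfl

lemma exists_subset_image {α β : Type*} {f : α → β} {σ : Set α} {T : Set β}
    (h : T ⊆ f '' σ) : ∃ τ ⊆ σ, T = f '' τ :=
  ⟨σ ∩ f ⁻¹' T, Set.inter_subset_left, by
    rw [Set.image_inter_preimage, Set.inter_eq_self_of_subset_right h]⟩

variable {K L X : Cpx} (i : CpxHom K L) (u : CpxHom K X)

open Classical in
noncomputable def pLf : L.V → X.V ⊕ {l : L.V // l ∉ Set.range i.f} := fun l =>
  if h : l ∈ Set.range i.f then Sum.inl (u.f h.choose) else Sum.inr ⟨l, h⟩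

lemma pLf_i (hmono : Function.Injective i.f) (k : K.V) :
    pLf i u (i.f k) = Sum.inl (u.f k) := by
  have h : i.f k ∈ Set.range i.f := ⟨k, rfl⟩
  rw [pLf, dif_pos h, hmono h.choose_spec]

lemma pLf_not {l : L.V} (h : l ∉ Set.range i.f) : pLf i u l = Sum.inr ⟨l, h⟩ := by
  rw [pLf, dif_neg h]

noncomputable def pushCpx : Cpx where
  V := X.V ⊕ {l : L.V // l ∉ Set.range i.f}
  faces := {S | (∃ σ ∈ L.faces, S = pLf i u '' σ) ∨ ∃ σ ∈ X.faces, S = Sum.inl '' σ}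
  finite_mem := by
    rintro S (⟨σ, hσ, rfl⟩ | ⟨σ, hσ, rfl⟩)
    · exact (L.finite_mem σ hσ).image _
    · exact (X.finite_mem σ hσ).image _
  down := by
    rintro S (⟨σ, hσ, rfl⟩ | ⟨σ, hσ, rfl⟩) T hT
    · obtain ⟨τ, hτσ, rfl⟩ := exists_subset_image hT
      exact Or.inl ⟨τ, L.down σ hσ τ hτσ, rfl⟩
    · obtain ⟨τ, hτσ, rfl⟩ := exists_subset_image hT
      exact Or.inr ⟨τ, X.down σ hσ τ hτσ, rfl⟩

end PushAux

/-- The pushout of the inclusion of a ×-deformation retract `i : K → L` along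
`u : K → X` is again the inclusion of a ×-deformation retract `j : X → Y`. -/
theorem pushout_xDefRetract {K L X Y : Cpx} (i : CpxHom K L) (u : CpxHom K X)
    (v : CpxHom L Y) (j : CpxHom X Y) (hmono : Function.Injective i.f)
    (hi : IsXDefRetractIncl i) (hpo : IsPushoutSq i u v j) :
    Function.Injective j.f ∧ IsXDefRetractIncl j := by
  classical
  obtain ⟨rK, hrK, n, hn, H, hH0, hHn, hHc⟩ := hi
  obtain ⟨hsq, hup⟩ := hpo
  have hcomm : ∀ k, j.f (u.f k) = v.f (i.f k) := fun k =>
    congrFun (congrArg CpxHom.f hsq) k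
  -- the concrete pushout
  set P := pushCpx i u with hP
  have pLface : ∀ σ ∈ L.faces, pLf i u '' σ ∈ P.faces := fun σ hσ => Or.inl ⟨σ, hσ, rfl⟩
  have pXface : ∀ σ ∈ X.faces, (Sum.inl : X.V → P.V) '' σ ∈ P.faces := fun σ hσ =>
    Or.inr ⟨σ, hσ, rfl⟩
  set pL : CpxHom L P := ⟨pLf i u, pLface⟩ with hpL
  set pX : CpxHom X P := ⟨Sum.inl, pXface⟩ with hpX
  have hsq' : pL.comp i = pX.comp u :=
    CpxHom.ext' (funext fun k => pLf_i i u hmono k)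
  obtain ⟨φ, ⟨hφv, hφj⟩, _⟩ := hup P pL pX hsq'
  have hφv' : ∀ l, φ.f (v.f l) = pLf i u l := fun l => congrFun (congrArg CpxHom.f hφv) l
  have hφj' : ∀ x, φ.f (j.f x) = Sum.inl x := fun x => congrFun (congrArg CpxHom.f hφj) x
  have hinj : Function.Injective j.f := fun a b h =>
    Sum.inl_injective (by rw [← hφj' a, ← hφj' b, h])
  -- the map ψ : P → Y
  have psi_pL : ∀ l, Sum.elim j.f (fun p : {l : L.V // l ∉ Set.range i.f} => v.f p.1)
      (pLf i u l) = v.f l := by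
    intro l
    by_cases h : l ∈ Set.range i.f
    · obtain ⟨k, rfl⟩ := h
      rw [pLf_i i u hmono, Sum.elim_inl, hcomm]
    · rw [pLf_not i u h, Sum.elim_inr]
  have ψface : ∀ S ∈ P.faces,
      Sum.elim j.f (fun p : {l : L.V // l ∉ Set.range i.f} => v.f p.1) '' S ∈ Y.faces := by
    rintro S (⟨σ, hσ, rfl⟩ | ⟨σ, hσ, rfl⟩)
    · rw [← Set.image_comp]
      have he : (Sum.elim j.f (fun p : {l : L.V // l ∉ Set.range i.f} => v.f p.1)
          ∘ pLf i u) '' σ = v.f '' σ := Set.image_congr' psi_pL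
      rw [he]
      exact v.map_face σ hσ
    · rw [← Set.image_comp, Sum.elim_comp_inl]
      exact j.map_face σ hσ
  set ψ : CpxHom P Y := ⟨_, ψface⟩ with hψ
  have hψpL : ∀ l, ψ.f (pLf i u l) = v.f l := psi_pL
  have hψpX : ∀ x, ψ.f (Sum.inl x) = j.f x := fun x => rfl
  -- ψ ∘ φ = id
  have idface : ∀ σ ∈ Y.faces, (id : Y.V → Y.V) '' σ ∈ Y.faces := by
    intro σ hσ; rwa [Set.image_id]
  have hid : ∀ y, ψ.f (φ.f y) = y := by
    obtain ⟨c, _, hcuniq⟩ := hup Y v j hsq.symm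
    have e1 : (ψ.comp φ).comp v = v := CpxHom.ext' (funext fun l => by
      show ψ.f (φ.f (v.f l)) = v.f l
      rw [hφv' l]; exact hψpL l)
    have e2 : (ψ.comp φ).comp j = j := CpxHom.ext' (funext fun x => by
      show ψ.f (φ.f (j.f x)) = j.f x
      rw [hφj' x]; exact hψpX x)
    have e3 : (CpxHom.mk id idface).comp v = v := CpxHom.ext' rfl
    have e4 : (CpxHom.mk id idface).comp j = j := CpxHom.ext' rfl
    have := (hcuniq _ ⟨e1, e2⟩).trans (hcuniq _ ⟨e3, e4⟩).symm
    intro y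
    exact congrFun (congrArg CpxHom.f this) y
  -- the retraction P → X
  have rP_pL : ∀ l, Sum.elim id (fun p : {l' : L.V // l' ∉ Set.range i.f} =>
      u.f (rK.f p.1)) (pLf i u l) = u.f (rK.f l) := by
    intro l
    by_cases h : l ∈ Set.range i.f
    · obtain ⟨k, rfl⟩ := h
      rw [pLf_i i u hmono, Sum.elim_inl, id_eq, hrK]
    · rw [pLf_not i u h, Sum.elim_inr]
  have rPface : ∀ S ∈ P.faces,
      Sum.elim id (fun p : {l' : L.V // l' ∉ Set.range i.f} => u.f (rK.f p.1)) '' S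
        ∈ X.faces := by
    rintro S (⟨σ, hσ, rfl⟩ | ⟨σ, hσ, rfl⟩)
    · rw [← Set.image_comp]
      have he : (Sum.elim id (fun p : {l' : L.V // l' ∉ Set.range i.f} =>
          u.f (rK.f p.1)) ∘ pLf i u) '' σ = (u.f ∘ rK.f) '' σ := Set.image_congr' rP_pL
      rw [he, Set.image_comp]
      exact u.map_face _ (rK.map_face σ hσ)
    · rw [← Set.image_comp, Sum.elim_comp_inl, Set.image_id]
      exact hσ
  set rP : CpxHom P X := ⟨_, rPface⟩ with hrP
  -- the homotopy on P
  set HPf : P.V × Fin (n + 1) → P.V := fun pt =>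
    Sum.elim Sum.inl (fun p : {l : L.V // l ∉ Set.range i.f} =>
      pLf i u (H.f (p.1, pt.2))) pt.1 with hHPf
  have HP_pL : ∀ (l : L.V) (t : Fin (n + 1)), HPf (pLf i u l, t) = pLf i u (H.f (l, t)) := by
    intro l t
    by_cases h : l ∈ Set.range i.f
    · obtain ⟨k, rfl⟩ := h
      rw [pLf_i i u hmono]
      show Sum.inl (u.f k) = pLf i u (H.f (i.f k, t))
      rw [hHc, pLf_i i u hmono]
    · rw [pLf_not i u h]
      rfl
  have HP0 : ∀ p : P.V, HPf (p, (0 : Fin (n + 1))) = p := by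
    rintro (x | p)
    · rfl
    · show pLf i u (H.f (p.1, (0 : Fin (n + 1)))) = Sum.inr p
      rw [hH0, pLf_not i u p.2]
  have HPn : ∀ p : P.V, HPf (p, Fin.last n) = Sum.inl (rP.f p) := by
    rintro (x | p)
    · rfl
    · show pLf i u (H.f (p.1, Fin.last n)) = Sum.inl (u.f (rK.f p.1))
      rw [hHn, pLf_i i u hmono]
  have HPX : ∀ (x : X.V) (t : Fin (n + 1)), HPf (Sum.inl x, t) = Sum.inl x := fun x t => rfl
  have HPface : ∀ S ∈ (prodCpx P (pathCpx n)).faces, HPf '' S ∈ P.faces := by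
    rintro S ⟨hfin, hfst, hsnd⟩
    rcases hfst with ⟨σ, hσ, hσeq⟩ | ⟨σ, hσ, hσeq⟩
    · set T : Set (L.V × Fin (n + 1)) := {lt | lt.1 ∈ σ ∧ (pLf i u lt.1, lt.2) ∈ S} with hT
      have hTface : T ∈ (prodCpx L (pathCpx n)).faces := by
        refine ⟨?_, ?_, ?_⟩
        · refine Set.Finite.subset ((L.finite_mem σ hσ).prod (hfin.image Prod.snd)) ?_
          rintro ⟨l, t⟩ ⟨hl, hS⟩
          exact ⟨hl, ⟨_, hS, rfl⟩⟩
        · refine L.down σ hσ _ ?_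
          rintro l ⟨⟨l', t⟩, ⟨hl', _⟩, rfl⟩
          exact hl'
        · refine (pathCpx n).down _ hsnd _ ?_
          rintro t ⟨⟨l', t'⟩, ⟨_, hS⟩, rfl⟩
          exact ⟨_, hS, rfl⟩
      have heq : HPf '' S = pLf i u '' (H.f '' T) := by
        ext p; constructor
        · rintro ⟨⟨q, t⟩, hqt, rfl⟩
          have hq : q ∈ Prod.fst '' S := ⟨_, hqt, rfl⟩
          rw [hσeq] at hq
          obtain ⟨l, hl, rfl⟩ := hq
          exact ⟨H.f (l, t), ⟨(l, t), ⟨hl, hqt⟩, rfl⟩, (HP_pL l t).symm⟩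
        · rintro ⟨_, ⟨⟨l, t⟩, ⟨hl, hS⟩, rfl⟩, rfl⟩
          exact ⟨(pLf i u l, t), hS, HP_pL l t⟩
      rw [heq]
      exact Or.inl ⟨_, H.map_face T hTface, rfl⟩
    · have heq : HPf '' S = Prod.fst '' S := by
        ext p; constructor
        · rintro ⟨⟨q, t⟩, hqt, rfl⟩
          have hq : q ∈ Prod.fst '' S := ⟨_, hqt, rfl⟩
          rw [hσeq] at hq
          obtain ⟨x, hx, rfl⟩ := hq
          exact ⟨(Sum.inl x, t), hqt, rfl⟩
        · rintro ⟨⟨q, t⟩, hqt, rfl⟩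
          have hq : q ∈ Prod.fst '' S := ⟨_, hqt, rfl⟩
          rw [hσeq] at hq
          obtain ⟨x, hx, rfl⟩ := hq
          exact ⟨(Sum.inl x, t), hqt, rfl⟩
      rw [heq, hσeq]
      exact Or.inr ⟨σ, hσ, rfl⟩
  set HP : CpxHom (prodCpx P (pathCpx n)) P := ⟨HPf, HPface⟩ with hHP
  -- φ × id
  have φIface : ∀ S ∈ (prodCpx Y (pathCpx n)).faces,
      (fun yt : Y.V × Fin (n + 1) => (φ.f yt.1, yt.2)) '' S
        ∈ (prodCpx P (pathCpx n)).faces := by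
    rintro S ⟨hfin, h1, h2⟩
    refine ⟨hfin.image _, ?_, ?_⟩
    · have : Prod.fst '' ((fun yt : Y.V × Fin (n + 1) => (φ.f yt.1, yt.2)) '' S)
          = φ.f '' (Prod.fst '' S) := by
        exact (Set.image_image _ _ _).trans (Set.image_image φ.f Prod.fst S).symm
      exact Set.mem_of_eq_of_mem this (φ.map_face _ h1)
    · have : Prod.snd '' ((fun yt : Y.V × Fin (n + 1) => (φ.f yt.1, yt.2)) '' S)
          = Prod.snd '' S := by
        exact Set.image_image _ _ _
      exact Set.mem_of_eq_of_mem this h2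
  set φI : CpxHom (prodCpx Y (pathCpx n)) (prodCpx P (pathCpx n)) := ⟨_, φIface⟩ with hφI
  refine ⟨hinj, rP.comp φ, fun x => ?_, n, hn, ψ.comp (HP.comp φI), fun y => ?_,
    fun y => ?_, fun x t => ?_⟩
  · show rP.f (φ.f (j.f x)) = x
    rw [hφj' x]
    rfl
  · show ψ.f (HPf (φ.f y, 0)) = y
    rw [HP0]
    exact hid y
  · show ψ.f (HPf (φ.f y, Fin.last n)) = j.f (rP.f (φ.f y))
    rw [HPn]
    exact hψpX _
  · show ψ.f (HPf (φ.f (j.f x), t)) = j.f x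
    rw [hφj' x, HPX]
    exact hψpX x
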